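/- Let p > 1 and let {u_n} be a bounded sequence in L^p(ℝ^k) converging almost everywhere to u. Then u ∈ L^p(ℝ^k) and ‖u_n - u‖_p^p = ‖u_n‖_p^p - ‖u‖_p^p + o(1) as n → ∞ (Brezis–Lieb lemma). -/

import Mathlib

open Real MeasureTheory Filter Topology
open scoped ENNReal

private lemma bl_lemA (p : ℝ) (hp : 1 < p) {ε : ℝ} (hε : 0 < ε) :
    ∃ C : ℝ, 0 ≤ C ∧ ∀ a b : ℝ, |a + b| ^ p ≤ (1 + ε) * |a| ^ p + C * |b| ^ p := by
  set l : ℝ := (1 + ε) ^ (-(1 / (p - 1))) with hl_def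
  have hl0 : 0 < l := Real.rpow_pos_of_pos (by linarith) _
  have hl1 : l < 1 := Real.rpow_lt_one_of_one_lt_of_neg (by linarith)
    (by rw [neg_lt, neg_zero]; exact div_pos one_pos (by linarith))
  have hll : l ^ (1 - p) = 1 + ε := by
    rw [hl_def, ← Real.rpow_mul (by linarith : (0:ℝ) ≤ 1 + ε)]
    rw [show (-(1 / (p - 1))) * (1 - p) = (p - 1) * (p - 1)⁻¹ by ring,
      mul_inv_cancel₀ (by linarith : p - 1 ≠ 0), Real.rpow_one]
  have h1l : 0 < 1 - l := by linarith
  refine ⟨(1 - l) ^ (1 - p), Real.rpow_nonneg h1l.le _, fun a b => ?_⟩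
  have h1 : |a + b| ^ p ≤ (|a| + |b|) ^ p :=
    Real.rpow_le_rpow (abs_nonneg _) (abs_add_le _ _) (by linarith)
  have h2 : |a| + |b| = l • (|a| / l) + (1 - l) • (|b| / (1 - l)) := by
    simp only [smul_eq_mul]
    field_simp
  have h3 := (convexOn_rpow hp.le).2 (Set.mem_Ici.2 (by positivity : (0:ℝ) ≤ |a| / l))
    (Set.mem_Ici.2 (by positivity : (0:ℝ) ≤ |b| / (1 - l))) hl0.le h1l.le (by ring)
  simp only [smul_eq_mul] at h3 h2
  have e1 : l * (|a| / l) ^ p = l ^ (1 - p) * |a| ^ p := by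
    rw [Real.div_rpow (abs_nonneg _) hl0.le, Real.rpow_sub hl0, Real.rpow_one]
    ring
  have e2 : (1 - l) * (|b| / (1 - l)) ^ p = (1 - l) ^ (1 - p) * |b| ^ p := by
    rw [Real.div_rpow (abs_nonneg _) h1l.le, Real.rpow_sub h1l, Real.rpow_one]
    ring
  calc |a + b| ^ p ≤ (|a| + |b|) ^ p := h1
    _ = (l * (|a| / l) + (1 - l) * (|b| / (1 - l))) ^ p := by rw [← h2]
    _ ≤ l * (|a| / l) ^ p + (1 - l) * (|b| / (1 - l)) ^ p := h3
    _ = (1 + ε) * |a| ^ p + (1 - l) ^ (1 - p) * |b| ^ p := by rw [e1, e2, hll]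

private lemma bl_lemB (p : ℝ) (hp : 1 < p) {ε : ℝ} (hε : 0 < ε) :
    ∃ C : ℝ, 0 ≤ C ∧ ∀ a b : ℝ,
      |(|a + b| ^ p - |a| ^ p)| ≤ ε * |a| ^ p + C * |b| ^ p := by
  obtain ⟨C₁, hC₁, h₁⟩ := bl_lemA p hp one_pos
  obtain ⟨C₂, hC₂, h₂⟩ := bl_lemA p hp (half_pos hε)
  refine ⟨ε / 2 * C₁ + C₂, by positivity, fun a b => ?_⟩
  have ha : (0:ℝ) ≤ |a| ^ p := Real.rpow_nonneg (abs_nonneg _) _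
  have hb : (0:ℝ) ≤ |b| ^ p := Real.rpow_nonneg (abs_nonneg _) _
  have hab : (0:ℝ) ≤ |a + b| ^ p := Real.rpow_nonneg (abs_nonneg _) _
  have hup := h₂ a b
  have hlow := h₂ (a + b) (-b)
  rw [add_neg_cancel_right, abs_neg] at hlow
  have hbig := h₁ a b
  rw [abs_sub_le_iff]
  constructor <;>
    nlinarith [mul_nonneg (mul_nonneg (half_pos hε).le hC₁) hb,
      mul_nonneg hε.le ha, mul_le_mul_of_nonneg_left hbig (half_pos hε).le]

theorem stmt11 (k : ℕ) (hk : 1 ≤ k) (p : ℝ) (hp : 1 < p)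
    (u : ℕ → EuclideanSpace ℝ (Fin k) → ℝ) (v : EuclideanSpace ℝ (Fin k) → ℝ)
    (hmeas : ∀ n, AEStronglyMeasurable (u n) volume)
    (C : ℝ≥0∞) (hC : C ≠ ⊤)
    (hbdd : ∀ n, eLpNorm (u n) (ENNReal.ofReal p) volume ≤ C)
    (hae : ∀ᵐ x ∂(volume : Measure (EuclideanSpace ℝ (Fin k))),
      Tendsto (fun n => u n x) atTop (𝓝 (v x))) :
    MemLp v (ENNReal.ofReal p) volume ∧
      Tendsto (fun n =>
          (∫ x, |u n x - v x| ^ p) - ((∫ x, |u n x| ^ p) - ∫ x, |v x| ^ p))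
        atTop (𝓝 0) := by
  have hp0 : (0:ℝ) < p := by linarith
  set q : ℝ≥0∞ := ENNReal.ofReal p with hq
  have hq0 : q ≠ 0 := by
    simp only [hq, ne_eq, ENNReal.ofReal_eq_zero, not_le]; exact hp0
  have hqtop : q ≠ ⊤ := ENNReal.ofReal_ne_top
  have hqr : q.toReal = p := ENNReal.toReal_ofReal hp0.le
  have hmemu : ∀ n, MemLp (u n) q volume :=
    fun n => ⟨hmeas n, lt_of_le_of_lt (hbdd n) hC.lt_top⟩
  have hvmeas : AEStronglyMeasurable v volume :=
    aestronglyMeasurable_of_tendsto_ae atTop hmeas hae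
  have hvnorm : eLpNorm v q volume ≤ C := by
    refine (Lp.eLpNorm_lim_le_liminf_eLpNorm hmeas v hae).trans ?_
    refine (Filter.liminf_le_liminf (Filter.Eventually.of_forall hbdd)).trans ?_
    simp [Filter.liminf_const]
  have hmemv : MemLp v q volume := ⟨hvmeas, lt_of_le_of_lt hvnorm hC.lt_top⟩
  refine ⟨hmemv, ?_⟩
  set g : ℕ → EuclideanSpace ℝ (Fin k) → ℝ := fun n x => u n x - v x with hgdef
  have hmemg : ∀ n, MemLp (g n) q volume := fun n => (hmemu n).sub hmemv
  have hgmeas : ∀ n, AEStronglyMeasurable (g n) volume := fun n => (hmemg n).1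
  -- continuity of t ↦ |t| ^ p
  have hcont : Continuous fun t : ℝ => |t| ^ p := by
    have h1 : Continuous fun t : ℝ => t ^ p := by
      rw [continuous_iff_continuousAt]
      exact fun x => Real.continuousAt_rpow_const x p (Or.inr hp0.le)
    exact h1.comp continuous_abs
  -- integrability
  have hI : ∀ (f : EuclideanSpace ℝ (Fin k) → ℝ), MemLp f q volume →
      Integrable (fun x => |f x| ^ p) volume := by
    intro f hf
    have := hf.integrable_norm_rpow hq0 hqtop
    simpa [hqr, Real.norm_eq_abs] using this
  have hIu : ∀ n, Integrable (fun x => |u n x| ^ p) volume := fun n => hI _ (hmemu n)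
  have hIv : Integrable (fun x => |v x| ^ p) volume := hI _ hmemv
  have hIg : ∀ n, Integrable (fun x => |g n x| ^ p) volume := fun n => hI _ (hmemg n)
  -- uniform bound on ∫ |g n|^p
  set M : ℝ := ((2 * C).toReal) ^ p with hM_def
  have hM0 : 0 ≤ M := Real.rpow_nonneg ENNReal.toReal_nonneg _
  have h2C : 2 * C ≠ ⊤ := ENNReal.mul_ne_top (by simp) hC
  have hM : ∀ n, ∫ x, |g n x| ^ p ≤ M := by
    intro n
    have h1 : eLpNorm (g n) q volume ≤ 2 * C := by
      refine (eLpNorm_sub_le (hmeas n) hvmeas ?_).trans ?_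
      · rw [hq]; exact ENNReal.one_le_ofReal.2 hp.le
      · rw [two_mul]; exact add_le_add (hbdd n) hvnorm
    have h2 := (hmemg n).eLpNorm_eq_integral_rpow_norm hq0 hqtop
    rw [h2] at h1
    have h3 : (∫ x, ‖g n x‖ ^ q.toReal) ^ q.toReal⁻¹ ≤ (2 * C).toReal :=
      (ENNReal.ofReal_le_iff_le_toReal h2C).1 h1
    have h4 : (0:ℝ) ≤ ∫ x, ‖g n x‖ ^ q.toReal :=
      integral_nonneg fun x => Real.rpow_nonneg (norm_nonneg _) _
    have h5 : ((∫ x, ‖g n x‖ ^ q.toReal) ^ q.toReal⁻¹) ^ q.toReal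
        = ∫ x, ‖g n x‖ ^ q.toReal :=
      Real.rpow_inv_rpow h4 (by rw [hqr]; exact hp0.ne')
    have h6 : (∫ x, ‖g n x‖ ^ q.toReal) ≤ ((2 * C).toReal) ^ q.toReal := by
      rw [← h5]
      exact Real.rpow_le_rpow (Real.rpow_nonneg h4 _) h3 (by rw [hqr]; exact hp0.le)
    rw [hqr] at h6
    rw [hM_def]
    simpa [Real.norm_eq_abs, ENNReal.toReal_mul] using h6
  -- the limit
  rw [Metric.tendsto_atTop]
  intro ε hε
  set δ : ℝ := ε / (2 * (M + 1)) with hδ_def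
  have hδ0 : 0 < δ := by positivity
  obtain ⟨Cδ, hCδ0, hCδ⟩ := bl_lemB p hp hδ0
  -- the functions W n
  set W : ℕ → EuclideanSpace ℝ (Fin k) → ℝ := fun n x =>
    max (|(|u n x| ^ p - |g n x| ^ p - |v x| ^ p)| - δ * |g n x| ^ p) 0 with hW_def
  have hW0 : ∀ n x, 0 ≤ W n x := fun n x => le_max_right _ _
  have hkey : ∀ n x, |(|u n x| ^ p - |g n x| ^ p)| ≤ δ * |g n x| ^ p + Cδ * |v x| ^ p := by
    intro n x
    have := hCδ (g n x) (v x)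
    rwa [show g n x + v x = u n x by simp [hgdef]] at this
  have hWle : ∀ n x, W n x ≤ (Cδ + 1) * |v x| ^ p := by
    intro n x
    have hv0 : (0:ℝ) ≤ |v x| ^ p := Real.rpow_nonneg (abs_nonneg _) _
    refine max_le ?_ (by positivity)
    have h1 : |(|u n x| ^ p - |g n x| ^ p - |v x| ^ p)|
        ≤ |(|u n x| ^ p - |g n x| ^ p)| + |v x| ^ p := by
      calc |(|u n x| ^ p - |g n x| ^ p - |v x| ^ p)|
          ≤ |(|u n x| ^ p - |g n x| ^ p)| + |(|v x| ^ p)| := abs_sub _ _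
        _ = |(|u n x| ^ p - |g n x| ^ p)| + |v x| ^ p := by rw [abs_of_nonneg hv0]
    have := hkey n x
    linarith
  have hWD : ∀ n x, |(|u n x| ^ p - |g n x| ^ p - |v x| ^ p)| ≤ W n x + δ * |g n x| ^ p := by
    intro n x
    have := le_max_left (|(|u n x| ^ p - |g n x| ^ p - |v x| ^ p)| - δ * |g n x| ^ p) (0:ℝ)
    linarith [this]
  -- measurability of W n
  have hWmeas : ∀ n, AEStronglyMeasurable (W n) volume := by
    intro n
    have h1 : AEStronglyMeasurable (fun x => |u n x| ^ p) volume :=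
      hcont.comp_aestronglyMeasurable (hmeas n)
    have h2 : AEStronglyMeasurable (fun x => |g n x| ^ p) volume :=
      hcont.comp_aestronglyMeasurable (hgmeas n)
    have h3 : AEStronglyMeasurable (fun x => |v x| ^ p) volume :=
      hcont.comp_aestronglyMeasurable hvmeas
    exact (continuous_id.max continuous_const).comp_aestronglyMeasurable
      ((continuous_abs.comp_aestronglyMeasurable ((h1.sub h2).sub h3)).sub
        (h2.const_mul δ))
  -- integrability of W n
  have hWint : ∀ n, Integrable (W n) volume := by
    intro n
    refine Integrable.mono (hIv.const_mul (Cδ + 1)) (hWmeas n) ?_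
    filter_upwards with x
    have hv0 : (0:ℝ) ≤ |v x| ^ p := Real.rpow_nonneg (abs_nonneg _) _
    rw [Real.norm_eq_abs, Real.norm_eq_abs, abs_of_nonneg (hW0 n x),
      abs_of_nonneg (by positivity : (0:ℝ) ≤ (Cδ + 1) * |v x| ^ p)]
    exact hWle n x
  -- a.e. convergence of W n to 0
  have hWtend : ∀ᵐ x ∂(volume : Measure (EuclideanSpace ℝ (Fin k))),
      Tendsto (fun n => W n x) atTop (𝓝 0) := by
    filter_upwards [hae] with x hx
    have hgx : Tendsto (fun n => g n x) atTop (𝓝 0) := by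
      simpa [hgdef] using hx.sub (tendsto_const_nhds : Tendsto (fun _ : ℕ => v x) atTop _)
    have h1 : Tendsto (fun n => |g n x| ^ p) atTop (𝓝 0) := by
      have := (hcont.tendsto 0).comp hgx
      simpa [Function.comp_def, Real.zero_rpow hp0.ne'] using this
    have h2 : Tendsto (fun n => |u n x| ^ p) atTop (𝓝 (|v x| ^ p)) :=
      (hcont.tendsto _).comp hx
    have hD : Tendsto (fun n => |u n x| ^ p - |g n x| ^ p - |v x| ^ p) atTop (𝓝 0) := by
      have := (h2.sub h1).sub (tendsto_const_nhds : Tendsto (fun _ : ℕ => |v x| ^ p) atTop _)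
      simpa using this
    have hDabs : Tendsto (fun n => |(|u n x| ^ p - |g n x| ^ p - |v x| ^ p)|) atTop (𝓝 0) := by
      simpa using hD.abs
    refine squeeze_zero (fun n => hW0 n x) (fun n => ?_) hDabs
    have hg0 : (0:ℝ) ≤ δ * |g n x| ^ p := by positivity
    exact max_le (by linarith) (abs_nonneg _)
  -- dominated convergence
  have hWlim : Tendsto (fun n => ∫ x, W n x) atTop (𝓝 0) := by
    have := tendsto_integral_of_dominated_convergence (fun x => (Cδ + 1) * |v x| ^ p)
      hWmeas (hIv.const_mul (Cδ + 1)) (fun n => by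
        filter_upwards with x
        rw [Real.norm_eq_abs, abs_of_nonneg (hW0 n x)]
        exact hWle n x) hWtend
    simpa using this
  have hev : ∀ᶠ n in atTop, ∫ x, W n x < ε / 2 :=
    hWlim.eventually_lt_const (by positivity)
  obtain ⟨N, hN⟩ := eventually_atTop.1 hev
  refine ⟨N, fun n hn => ?_⟩
  have hWn := hN n hn
  -- integral identities
  have hI1 : Integrable (fun x => |u n x| ^ p - |g n x| ^ p) volume := (hIu n).sub (hIg n)
  have hID : Integrable (fun x => |u n x| ^ p - |g n x| ^ p - |v x| ^ p) volume :=
    hI1.sub hIv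
  have hintD : ∫ x, (|u n x| ^ p - |g n x| ^ p - |v x| ^ p)
      = (∫ x, |u n x| ^ p) - (∫ x, |g n x| ^ p) - ∫ x, |v x| ^ p := by
    rw [integral_sub hI1 hIv, integral_sub (hIu n) (hIg n)]
  have habs : |∫ x, (|u n x| ^ p - |g n x| ^ p - |v x| ^ p)|
      ≤ ∫ x, |(|u n x| ^ p - |g n x| ^ p - |v x| ^ p)| := by
    simpa [Real.norm_eq_abs] using
      norm_integral_le_integral_norm (fun x => |u n x| ^ p - |g n x| ^ p - |v x| ^ p)
        (μ := volume)
  have hmono : ∫ x, |(|u n x| ^ p - |g n x| ^ p - |v x| ^ p)|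
      ≤ (∫ x, W n x) + δ * ∫ x, |g n x| ^ p := by
    have h1 : ∫ x, |(|u n x| ^ p - |g n x| ^ p - |v x| ^ p)|
        ≤ ∫ x, (W n x + δ * |g n x| ^ p) :=
      integral_mono hID.abs ((hWint n).add ((hIg n).const_mul δ)) (hWD n)
    rwa [integral_add (hWint n) ((hIg n).const_mul δ), integral_const_mul δ _] at h1
  have hδM : δ * ∫ x, |g n x| ^ p ≤ ε / 2 := by
    have h1 : δ * (M + 1) = ε / 2 := by
      rw [hδ_def]; field_simp
    have h2 : δ * ∫ x, |g n x| ^ p ≤ δ * (M + 1) :=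
      mul_le_mul_of_nonneg_left (by linarith [hM n]) hδ0.le
    linarith
  -- assemble
  rw [Real.dist_eq, sub_zero]
  have heq : (∫ x, |u n x - v x| ^ p) - ((∫ x, |u n x| ^ p) - ∫ x, |v x| ^ p)
      = -((∫ x, |u n x| ^ p) - (∫ x, |g n x| ^ p) - ∫ x, |v x| ^ p) := by
    simp only [hgdef]; ring
  rw [heq, abs_neg, ← hintD]
  calc |∫ x, (|u n x| ^ p - |g n x| ^ p - |v x| ^ p)|
      ≤ ∫ x, |(|u n x| ^ p - |g n x| ^ p - |v x| ^ p)| := habs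
    _ ≤ (∫ x, W n x) + δ * ∫ x, |g n x| ^ p := hmono
    _ < ε / 2 + ε / 2 := by
        have := hδM
        linarith
    _ = ε := by ring
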